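/- Let T > 0 and let w : (0,T) × (0,∞) → ℝ be measurable with ∫_0^T ∫_0^∞ |w| dx dt < ∞. Suppose that ∫_0^T ∫_0^∞ w(t,x)(∂_t ψ + ∂_{xx} ψ)(t,x) dx dt = 0 for every function ψ : [0,T] × [0,∞) → ℝ that is C¹ in t and C² in x, is bounded together with ∂_t ψ, ∂_x ψ and ∂_{xx} ψ, and satisfies ψ(t,0) = 0 for all t ∈ [0,T] and ψ(T,x) = 0 for all x ≥ 0. Then w = 0 almost everywhere on (0,T) × (0,∞). -/

import Mathlib

open MeasureTheory Real Filter Topology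

noncomputable section

open Complex FourierTransform SchwartzMap
open scoped ContDiff

set_option maxHeartbeats 1000000

/-- A smooth compactly supported real function, viewed as a complex Schwartz function. -/
def toSchwartzC (g : ℝ → ℝ) (hg : ContDiff ℝ ∞ g) (hsupp : HasCompactSupport g) :
    SchwartzMap ℝ ℂ where
  toFun := fun x => (g x : ℂ)
  smooth' := Complex.ofRealCLM.contDiff.comp hg
  decay' := by
    intro k n
    have hsupp' : HasCompactSupport (fun x => (g x : ℂ)) :=
      hsupp.comp_left (g := (Complex.ofReal : ℝ → ℂ)) rfl
    have hsm : ContDiff ℝ ∞ (fun x => (g x : ℂ)) := Complex.ofRealCLM.contDiff.comp hg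
    have h1 : HasCompactSupport (iteratedFDeriv ℝ n (fun x => (g x : ℂ))) :=
      hsupp'.iteratedFDeriv n
    have h2 : Continuous (fun x => ‖x‖ ^ k * ‖iteratedFDeriv ℝ n (fun y => (g y : ℂ)) x‖) := by
      refine (continuous_norm.pow k).mul ?_
      exact (hsm.continuous_iteratedFDeriv (mod_cast le_top)).norm
    have h3 : HasCompactSupport
        (fun x => ‖x‖ ^ k * ‖iteratedFDeriv ℝ n (fun y => (g y : ℂ)) x‖) :=
      (h1.norm).mul_left
    obtain ⟨C, hC⟩ := h3.exists_bound_of_continuous h2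
    exact ⟨C, fun x => by simpa [_root_.abs_of_nonneg (by positivity :
      (0:ℝ) ≤ ‖x‖ ^ k * ‖iteratedFDeriv ℝ n (fun y => (g y : ℂ)) x‖)] using hC x⟩

/-- L¹ injectivity of the Fourier transform. -/
theorem fourier_inj {h : ℝ → ℂ} (hi : Integrable h)
    (h0 : ∀ ξ : ℝ, 𝓕 h ξ = 0) : ∀ᵐ x : ℝ, h x = 0 := by
  have key : ∀ φ : SchwartzMap ℝ ℂ, ∫ x : ℝ, h x * φ x = 0 := by
    intro φ
    set ψ := (FourierTransform.fourierCLE ℝ (SchwartzMap ℝ ℂ)).symm φ with hψ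
    have hφψ : ∀ x, 𝓕 (⇑ψ) x = φ x := by
      intro x
      have h1 := (FourierTransform.fourierCLE ℝ (SchwartzMap ℝ ℂ)).apply_symm_apply φ
      conv_rhs => rw [← h1]
      rw [FourierTransform.fourierCLE_apply]
      rfl
    have flip := VectorFourier.integral_fourierIntegral_smul_eq_flip
      (e := Real.fourierChar) (L := innerₗ ℝ) (μ := (volume : Measure ℝ))
      (ν := (volume : Measure ℝ)) Real.continuous_fourierChar
      (by exact continuous_inner) hi ψ.integrable
    have hL : ∀ x, VectorFourier.fourierIntegral Real.fourierChar volume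
        (innerₗ ℝ).flip (⇑ψ) x = 𝓕 (⇑ψ) x := by
      intro x
      show _ = VectorFourier.fourierIntegral Real.fourierChar volume (innerₗ ℝ) (⇑ψ) x
      unfold VectorFourier.fourierIntegral
      congr 1
      ext v
      congr 2
      simp [LinearMap.flip_apply, real_inner_comm]
    have hLHS : ∫ ξ : ℝ, (VectorFourier.fourierIntegral Real.fourierChar volume
        (innerₗ ℝ) h ξ) • ψ ξ = 0 := by
      have : ∀ ξ : ℝ, VectorFourier.fourierIntegral Real.fourierChar volume
          (innerₗ ℝ) h ξ = 0 := fun ξ => h0 ξ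
      simp [this]
    rw [hLHS] at flip
    have : ∫ x : ℝ, h x * φ x = ∫ x : ℝ, h x • VectorFourier.fourierIntegral
        Real.fourierChar volume (innerₗ ℝ).flip (⇑ψ) x := by
      congr 1
      ext x
      rw [hL, hφψ]
      simp [smul_eq_mul]
    rw [this, ← flip]
  have hloc : MeasureTheory.LocallyIntegrable h volume := hi.locallyIntegrable
  apply ae_eq_zero_of_integral_contDiff_smul_eq_zero hloc
  intro g hg hsupp
  have := key (toSchwartzC g hg hsupp)
  rw [← this]
  congr 1
  ext x
  show g x • h x = h x * (g x : ℂ)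
  rw [Complex.real_smul, mul_comm]

lemma exp_diff (z c : ℂ) :
    Complex.exp (z * Complex.I) * (-c) + Complex.exp (-z * Complex.I) * c
      = c * Complex.sin z * (-2 * Complex.I) := by
  rw [Complex.sin]
  have hI := Complex.I_sq
  linear_combination c * (Complex.exp (-z * Complex.I) - Complex.exp (z * Complex.I)) * hI

/-- Sine-transform injectivity on the half-line. -/
theorem sine_inj {h : ℝ → ℝ} (hm : Measurable h) (hi : IntegrableOn h (Set.Ioi 0))
    (hsin : ∀ ξ : ℝ, ∫ x in Set.Ioi (0:ℝ), h x * Real.sin (ξ * x) = 0) :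
    ∀ᵐ x ∂(volume.restrict (Set.Ioi (0:ℝ))), h x = 0 := by
  set g : ℝ → ℂ := fun x => if 0 < x then (h x : ℂ) else (if x < 0 then -(h (-x) : ℂ) else 0)
    with hg_def
  have hgm : Measurable g := by
    have h1 : Measurable fun x : ℝ => (h x : ℂ) := Complex.measurable_ofReal.comp hm
    have h2 : Measurable fun x : ℝ => -(h (-x) : ℂ) :=
      (Complex.measurable_ofReal.comp (hm.comp measurable_neg)).neg
    exact Measurable.ite measurableSet_Ioi h1
      (Measurable.ite measurableSet_Iio h2 measurable_const)
  -- integrability of g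
  have hIoi : IntegrableOn g (Set.Ioi 0) := by
    apply IntegrableOn.congr_fun (hi.ofReal (μ := volume.restrict (Set.Ioi 0))) ?_ measurableSet_Ioi
    intro x hx
    simp [hg_def, hx, Set.mem_Ioi.mp hx]
  have hemb : MeasurableEmbedding (fun x : ℝ => -x) :=
    (Homeomorph.neg ℝ).measurableEmbedding
  have hmap : volume.restrict (Set.Iio (0:ℝ)) =
      Measure.map (fun x : ℝ => -x) (volume.restrict (Set.Ioi (0:ℝ))) := by
    have h1 : (volume : Measure ℝ) = Measure.map (fun x : ℝ => -x) volume := by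
      have := Measure.map_neg_eq_self (volume : Measure ℝ)
      exact this.symm
    rw [show volume.restrict (Set.Iio (0:ℝ))
        = (Measure.map (fun x : ℝ => -x) volume).restrict (Set.Iio 0) by rw [← h1]]
    rw [hemb.restrict_map]
    congr 1
    ext x
    simp
  have hIio : IntegrableOn g (Set.Iio 0) := by
    unfold IntegrableOn
    rw [hmap]
    rw [hemb.integrable_map_iff]
    apply IntegrableOn.congr_fun ((hi.ofReal (μ := volume.restrict (Set.Ioi 0))).neg)
      ?_ measurableSet_Ioi
    intro x hx
    have hx' : (0:ℝ) < x := hx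
    simp [Function.comp, hg_def, hx', neg_neg,
      show ¬(0 < -x) by linarith, show -x < 0 by linarith]
  have hgint : Integrable g := by
    have : IntegrableOn g (Set.Iio 0 ∪ Set.Ioi 0) := hIio.union hIoi
    have hcompl : Set.Iio (0:ℝ) ∪ Set.Ioi 0 = {(0:ℝ)}ᶜ := by
      ext x; simp [lt_or_lt_iff_ne]
    rw [← integrableOn_univ]
    have h0 : volume ({(0:ℝ)} : Set ℝ) = 0 := measure_singleton 0
    rw [show (Set.univ : Set ℝ) = {(0:ℝ)}ᶜ ∪ {(0:ℝ)} from (Set.compl_union_self _).symm]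
    apply IntegrableOn.union (hcompl ▸ this)
    unfold IntegrableOn
    rw [Measure.restrict_eq_zero.mpr h0]
    exact integrable_zero_measure
  -- Fourier transform of g vanishes
  have hF : ∀ ξ : ℝ, 𝓕 g ξ = 0 := by
    intro ξ
    rw [Real.fourier_real_eq]
    set E : ℝ → ℂ := fun v => Real.fourierChar (-(v * ξ)) • g v with hE_def
    have hEint : Integrable E := by
      refine ((Real.fourierIntegral_convergent_iff ξ).2 hgint).congr
        (Filter.Eventually.of_forall fun v => ?_)
      simp [hE_def, mul_comm]
    have split : ∫ v, E v = (∫ v in Set.Iic (0:ℝ), E v) + ∫ v in Set.Ioi (0:ℝ), E v :=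
      (intervalIntegral.integral_Iic_add_Ioi hEint.integrableOn hEint.integrableOn).symm
    have hneg : ∫ v in Set.Iic (0:ℝ), E v = ∫ v in Set.Ioi (0:ℝ), E (-v) := by
      rw [integral_comp_neg_Ioi]; norm_num
    rw [split, hneg, ← integral_add]
    · have key : ∀ x ∈ Set.Ioi (0:ℝ), E (-x) + E x
          = ((h x * Real.sin ((2 * π * ξ) * x) : ℝ) : ℂ) * (-2 * Complex.I) := by
        intro x hx
        have hx' : (0:ℝ) < x := hx
        have hgx : g x = (h x : ℂ) := by simp [hg_def, hx']
        have hgnx : g (-x) = -(h x : ℂ) := by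
          simp [hg_def, show ¬(0 < -x) by linarith, show -x < 0 by linarith, neg_neg]
        rw [hE_def]
        simp only [hgx, hgnx, Circle.smul_def, Real.fourierChar_apply]
        rw [show (-(-x * ξ)) = x * ξ by ring,
          show (2 * π * ξ) * x = 2 * π * (x * ξ) by ring,
          show (2 * π * (-(x * ξ))) = -(2 * π * (x * ξ)) by ring,
          Complex.ofReal_neg]
        simp only [smul_eq_mul, Circle.smul_def]
        push_cast
        exact exp_diff _ _
      rw [setIntegral_congr_fun measurableSet_Ioi key]
      rw [integral_mul_const]
      rw [show (∫ a in Set.Ioi (0:ℝ), ((h a * Real.sin ((2 * π * ξ) * a) : ℝ) : ℂ))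
          = ((∫ a in Set.Ioi (0:ℝ), h a * Real.sin ((2 * π * ξ) * a) : ℝ) : ℂ) from
          integral_ofReal, hsin (2 * π * ξ)]
      simp
    · exact ((Measure.measurePreserving_neg (volume : Measure ℝ)).integrable_comp
        hEint.aestronglyMeasurable).2 hEint |>.integrableOn
    · exact hEint.integrableOn
  have hg0 := fourier_inj hgint hF
  have h1 : ∀ᵐ x ∂(volume.restrict (Set.Ioi (0:ℝ))), g x = 0 := ae_restrict_of_ae hg0
  have h2 : ∀ᵐ x ∂(volume.restrict (Set.Ioi (0:ℝ))), x ∈ Set.Ioi (0:ℝ) :=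
    ae_restrict_mem measurableSet_Ioi
  filter_upwards [h1, h2] with x hx1 hx2
  have : g x = (h x : ℂ) := by simp [hg_def, Set.mem_Ioi.mp hx2]
  rw [this] at hx1
  exact_mod_cast hx1

/-- Applying the weak formulation with `ψ (t,x) = a(t) sin (ξ x)`. -/
theorem test_sine (T : ℝ) (hT : 0 < T) (w : ℝ → ℝ → ℝ)
    (hw : ∀ ψ ψt ψx ψxx : ℝ → ℝ → ℝ,
      (∀ t x, t ∈ Set.Icc 0 T → x ∈ Set.Ici (0 : ℝ) →
        HasDerivWithinAt (fun s => ψ s x) (ψt t x) (Set.Icc 0 T) t) →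
      (∀ t x, t ∈ Set.Icc 0 T → x ∈ Set.Ici (0 : ℝ) →
        HasDerivWithinAt (fun y => ψ t y) (ψx t x) (Set.Ici 0) x) →
      (∀ t x, t ∈ Set.Icc 0 T → x ∈ Set.Ici (0 : ℝ) →
        HasDerivWithinAt (fun y => ψx t y) (ψxx t x) (Set.Ici 0) x) →
      ContinuousOn (fun p : ℝ × ℝ => ψ p.1 p.2) (Set.Icc 0 T ×ˢ Set.Ici 0) →
      ContinuousOn (fun p : ℝ × ℝ => ψt p.1 p.2) (Set.Icc 0 T ×ˢ Set.Ici 0) →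
      ContinuousOn (fun p : ℝ × ℝ => ψx p.1 p.2) (Set.Icc 0 T ×ˢ Set.Ici 0) →
      ContinuousOn (fun p : ℝ × ℝ => ψxx p.1 p.2) (Set.Icc 0 T ×ˢ Set.Ici 0) →
      (∃ C, ∀ t x, t ∈ Set.Icc 0 T → x ∈ Set.Ici (0 : ℝ) →
        |ψ t x| ≤ C ∧ |ψt t x| ≤ C ∧ |ψx t x| ≤ C ∧ |ψxx t x| ≤ C) →
      (∀ t ∈ Set.Icc 0 T, ψ t 0 = 0) →
      (∀ x, 0 ≤ x → ψ T x = 0) →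
      ∫ t in Set.Ioo 0 T, ∫ x in Set.Ioi (0 : ℝ), w t x * (ψt t x + ψxx t x) = 0)
    (ξ : ℝ) (c : ℝ → ℝ) (hc : Continuous c) :
    ∫ t in Set.Ioo 0 T, ∫ x in Set.Ioi (0:ℝ), w t x * (c t * Real.sin (ξ * x)) = 0 := by
  set φ : ℝ → ℝ := fun s => Real.exp (-(ξ^2) * s) * c s with hφ_def
  have hφc : Continuous φ := (Real.continuous_exp.comp (continuous_const.mul continuous_id)).mul hc
  set A : ℝ → ℝ := fun t => (∫ s in (0:ℝ)..T, φ s) - ∫ s in (0:ℝ)..t, φ s with hA_def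
  have hA' : ∀ t, HasDerivAt A (-(φ t)) t := by
    intro t
    have hB : HasDerivAt (fun u => ∫ s in (0:ℝ)..u, φ s) (φ t) t :=
      intervalIntegral.integral_hasDerivAt_right (hφc.intervalIntegrable 0 t)
        (hφc.stronglyMeasurable.stronglyMeasurableAtFilter) hφc.continuousAt
    simpa using (hB.const_sub (∫ s in (0:ℝ)..T, φ s))
  set a : ℝ → ℝ := fun t => -(Real.exp (ξ^2 * t) * A t) with ha_def
  have haT : a T = 0 := by simp [ha_def, hA_def]
  have ha' : ∀ t, HasDerivAt a (ξ^2 * a t + c t) t := by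
    intro t
    have hexp : HasDerivAt (fun t => Real.exp (ξ^2 * t)) (Real.exp (ξ^2 * t) * ξ^2) t := by
      simpa [Function.comp_def] using (Real.hasDerivAt_exp (ξ^2 * t)).comp t ((hasDerivAt_id t).const_mul (ξ^2))
    have hmul := (hexp.mul (hA' t)).neg
    have harith : -(Real.exp (ξ ^ 2 * t) * ξ ^ 2 * A t + Real.exp (ξ ^ 2 * t) * -(φ t))
        = ξ^2 * a t + c t := by
      have : Real.exp (ξ^2 * t) * φ t = c t := by
        rw [hφ_def]
        rw [← mul_assoc, ← Real.exp_add]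
        norm_num
      rw [ha_def]
      simp only []
      nlinarith [this]
    rw [harith] at hmul
    exact hmul
  have hacont : Continuous a := by
    rw [continuous_iff_continuousAt]
    exact fun t => (ha' t).differentiableAt.continuousAt
  have ha'cont : Continuous (fun t => ξ^2 * a t + c t) :=
    (continuous_const.mul hacont).add hc
  -- bounds on [0, T]
  obtain ⟨M, hM⟩ := (isCompact_Icc (a := (0:ℝ)) (b := T)).exists_bound_of_continuousOn
    hacont.continuousOn
  obtain ⟨M', hM'⟩ := (isCompact_Icc (a := (0:ℝ)) (b := T)).exists_bound_of_continuousOn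
    ha'cont.continuousOn
  have hM0 : 0 ≤ M := le_trans (norm_nonneg _) (hM 0 ⟨le_rfl, hT.le⟩)
  have hM'0 : 0 ≤ M' := le_trans (norm_nonneg _) (hM' 0 ⟨le_rfl, hT.le⟩)
  -- the test function
  have h0 := hw (fun t x => a t * Real.sin (ξ * x))
    (fun t x => (ξ^2 * a t + c t) * Real.sin (ξ * x))
    (fun t x => a t * (Real.cos (ξ * x) * ξ))
    (fun t x => a t * (-Real.sin (ξ * x) * ξ * ξ))
    (fun t x _ _ => ((ha' t).mul_const (Real.sin (ξ * x))).hasDerivWithinAt)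
    (by
      intro t x _ _
      have hsin : HasDerivAt (fun y => Real.sin (ξ * y)) (Real.cos (ξ * x) * ξ) x := by
        simpa [Function.comp_def] using (Real.hasDerivAt_sin (ξ * x)).comp x ((hasDerivAt_id x).const_mul ξ)
      exact (hsin.const_mul (a t)).hasDerivWithinAt)
    (by
      intro t x _ _
      have hcos : HasDerivAt (fun y => Real.cos (ξ * y) * ξ) (-Real.sin (ξ * x) * ξ * ξ) x := by
        have := ((Real.hasDerivAt_cos (ξ * x)).comp x ((hasDerivAt_id x).const_mul ξ)).mul_const ξ
        simpa [mul_assoc, mul_comm] using this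
      exact (hcos.const_mul (a t)).hasDerivWithinAt)
    (((hacont.comp continuous_fst).mul
      (Real.continuous_sin.comp (continuous_const.mul continuous_snd))).continuousOn)
    (((ha'cont.comp continuous_fst).mul
      (Real.continuous_sin.comp (continuous_const.mul continuous_snd))).continuousOn)
    (((hacont.comp continuous_fst).mul
      ((Real.continuous_cos.comp (continuous_const.mul continuous_snd)).mul
        continuous_const)).continuousOn)
    (((hacont.comp continuous_fst).mul
      ((((Real.continuous_sin.comp (continuous_const.mul continuous_snd)).neg).mul
        continuous_const).mul continuous_const)).continuousOn)
    (by
      refine ⟨M * (1 + |ξ| + ξ^2) + M', ?_⟩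
      intro t x ht _
      have haM : |a t| ≤ M := by simpa [Real.norm_eq_abs] using hM t ht
      have haM' : |ξ^2 * a t + c t| ≤ M' := by simpa [Real.norm_eq_abs] using hM' t ht
      have hs : |Real.sin (ξ * x)| ≤ 1 := Real.abs_sin_le_one _
      have hco : |Real.cos (ξ * x)| ≤ 1 := Real.abs_cos_le_one _
      have hp1 : (0:ℝ) ≤ M * |ξ| := mul_nonneg hM0 (abs_nonneg ξ)
      have hp2 : (0:ℝ) ≤ M * ξ^2 := mul_nonneg hM0 (sq_nonneg ξ)
      refine ⟨?_, ?_, ?_, ?_⟩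
      · rw [abs_mul]
        have h1 : |a t| * |Real.sin (ξ * x)| ≤ M * 1 :=
          mul_le_mul haM hs (abs_nonneg _) hM0
        linarith
      · rw [abs_mul]
        have h1 : |ξ^2 * a t + c t| * |Real.sin (ξ * x)| ≤ M' * 1 :=
          mul_le_mul haM' hs (abs_nonneg _) hM'0
        linarith
      · rw [abs_mul, abs_mul]
        have h2 : |Real.cos (ξ * x)| * |ξ| ≤ 1 * |ξ| :=
          mul_le_mul_of_nonneg_right hco (abs_nonneg _)
        have h1 : |a t| * (|Real.cos (ξ * x)| * |ξ|) ≤ M * (1 * |ξ|) :=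
          mul_le_mul haM h2 (mul_nonneg (abs_nonneg _) (abs_nonneg _)) hM0
        rw [one_mul] at h1
        linarith
      · have h2 : |(-Real.sin (ξ * x) * ξ * ξ)| ≤ ξ^2 := by
          rw [abs_mul, abs_mul, abs_neg]
          have h3 : |Real.sin (ξ * x)| * |ξ| * |ξ| ≤ 1 * |ξ| * |ξ| := by
            apply mul_le_mul_of_nonneg_right _ (abs_nonneg ξ)
            exact mul_le_mul_of_nonneg_right hs (abs_nonneg ξ)
          calc |Real.sin (ξ * x)| * |ξ| * |ξ| ≤ 1 * |ξ| * |ξ| := h3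
            _ = |ξ|^2 := by ring
            _ = ξ^2 := sq_abs ξ
        have h1 : |a t * (-Real.sin (ξ * x) * ξ * ξ)| ≤ M * ξ^2 := by
          rw [abs_mul]
          exact mul_le_mul haM h2 (abs_nonneg _) hM0
        exact le_trans h1 (by linarith))
    (fun t _ => by simp)
    (fun x _ => by simp [haT])
  have hptwise : ∀ t x, w t x * (c t * Real.sin (ξ * x))
      = w t x * ((ξ^2 * a t + c t) * Real.sin (ξ * x) + a t * (-Real.sin (ξ * x) * ξ * ξ)) := by
    intro t x; ring
  calc ∫ t in Set.Ioo 0 T, ∫ x in Set.Ioi (0:ℝ), w t x * (c t * Real.sin (ξ * x))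
      = ∫ t in Set.Ioo 0 T, ∫ x in Set.Ioi (0:ℝ), w t x *
        ((ξ^2 * a t + c t) * Real.sin (ξ * x) + a t * (-Real.sin (ξ * x) * ξ * ξ)) := by
        simp only [hptwise]
    _ = 0 := h0


/-- **Half-line Dirichlet uniqueness.** An integrable very weak solution of the heat
equation on `(0,T) × (0,∞)`, tested against bounded test functions `ψ` (C¹ in `t`,
C² in `x`, with bounded derivatives) vanishing at `x = 0` and at time `T`,
vanishes almost everywhere. -/
theorem halfline_dirichlet_uniqueness (T : ℝ) (hT : 0 < T) (w : ℝ → ℝ → ℝ)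
    (hmeas : Measurable (fun p : ℝ × ℝ => w p.1 p.2))
    (hint : IntegrableOn (fun p : ℝ × ℝ => w p.1 p.2) (Set.Ioo 0 T ×ˢ Set.Ioi 0))
    (hw : ∀ ψ ψt ψx ψxx : ℝ → ℝ → ℝ,
      (∀ t x, t ∈ Set.Icc 0 T → x ∈ Set.Ici (0 : ℝ) →
        HasDerivWithinAt (fun s => ψ s x) (ψt t x) (Set.Icc 0 T) t) →
      (∀ t x, t ∈ Set.Icc 0 T → x ∈ Set.Ici (0 : ℝ) →
        HasDerivWithinAt (fun y => ψ t y) (ψx t x) (Set.Ici 0) x) →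
      (∀ t x, t ∈ Set.Icc 0 T → x ∈ Set.Ici (0 : ℝ) →
        HasDerivWithinAt (fun y => ψx t y) (ψxx t x) (Set.Ici 0) x) →
      ContinuousOn (fun p : ℝ × ℝ => ψ p.1 p.2) (Set.Icc 0 T ×ˢ Set.Ici 0) →
      ContinuousOn (fun p : ℝ × ℝ => ψt p.1 p.2) (Set.Icc 0 T ×ˢ Set.Ici 0) →
      ContinuousOn (fun p : ℝ × ℝ => ψx p.1 p.2) (Set.Icc 0 T ×ˢ Set.Ici 0) →
      ContinuousOn (fun p : ℝ × ℝ => ψxx p.1 p.2) (Set.Icc 0 T ×ˢ Set.Ici 0) →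
      (∃ C, ∀ t x, t ∈ Set.Icc 0 T → x ∈ Set.Ici (0 : ℝ) →
        |ψ t x| ≤ C ∧ |ψt t x| ≤ C ∧ |ψx t x| ≤ C ∧ |ψxx t x| ≤ C) →
      (∀ t ∈ Set.Icc 0 T, ψ t 0 = 0) →
      (∀ x, 0 ≤ x → ψ T x = 0) →
      ∫ t in Set.Ioo 0 T, ∫ x in Set.Ioi (0 : ℝ), w t x * (ψt t x + ψxx t x) = 0) :
    ∀ᵐ p ∂(volume.restrict (Set.Ioo 0 T ×ˢ Set.Ioi (0 : ℝ))), w p.1 p.2 = 0 := by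
  have hvol : (volume : Measure (ℝ × ℝ)).restrict (Set.Ioo 0 T ×ˢ Set.Ioi 0)
      = (volume.restrict (Set.Ioo 0 T)).prod (volume.restrict (Set.Ioi 0)) := by
    rw [Measure.volume_eq_prod, Measure.prod_restrict]
  set μt := volume.restrict (Set.Ioo 0 T) with hμt
  set μx := volume.restrict (Set.Ioi (0:ℝ)) with hμx
  have hint' : Integrable (fun p : ℝ × ℝ => w p.1 p.2) (μt.prod μx) := by
    rw [hμt, hμx, Measure.prod_restrict, ← Measure.volume_eq_prod]
    exact hint
  have hsec : ∀ᵐ t ∂μt, Integrable (fun x => w t x) μx := hint'.prod_right_ae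
  have hnormint : Integrable (fun t => ∫ x, ‖w t x‖ ∂μx) μt :=
    hint'.integral_norm_prod_left
  set F : ℝ → ℝ → ℝ := fun t ξ => ∫ x in Set.Ioi (0:ℝ), w t x * Real.sin (ξ * x) with hF_def
  -- measurability and integrability of F in t
  have hwtm : ∀ t, Measurable (fun x => w t x) := fun t =>
    hmeas.comp (measurable_const.prodMk measurable_id)
  have hFmeas : ∀ ξ, AEStronglyMeasurable (fun t => F t ξ) μt := by
    intro ξ
    have sm : StronglyMeasurable (fun p : ℝ × ℝ => w p.1 p.2 * Real.sin (ξ * p.2)) :=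
      (hmeas.mul ((Real.measurable_sin.comp (measurable_const.mul measurable_snd)))).stronglyMeasurable
    exact sm.integral_prod_right'.aestronglyMeasurable
  have hFint : ∀ ξ, Integrable (fun t => F t ξ) μt := by
    intro ξ
    apply Integrable.mono' hnormint (hFmeas ξ)
    filter_upwards [hsec] with t ht
    calc ‖F t ξ‖ ≤ ∫ x, ‖w t x * Real.sin (ξ * x)‖ ∂μx := norm_integral_le_integral_norm _
      _ ≤ ∫ x, ‖w t x‖ ∂μx := by
          apply integral_mono_of_nonneg (Filter.Eventually.of_forall fun x => norm_nonneg _)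
            ht.norm
          apply Filter.Eventually.of_forall
          intro x
          show ‖w t x * Real.sin (ξ * x)‖ ≤ ‖w t x‖
          rw [norm_mul]
          calc ‖w t x‖ * ‖Real.sin (ξ * x)‖ ≤ ‖w t x‖ * 1 := by
                apply mul_le_mul_of_nonneg_left _ (norm_nonneg _)
                rw [Real.norm_eq_abs]; exact Real.abs_sin_le_one _
            _ = ‖w t x‖ := mul_one _
  -- Step I: for each ξ, F (·, ξ) vanishes a.e. on (0,T)
  have hF0 : ∀ ξ : ℝ, ∀ᵐ t ∂μt, F t ξ = 0 := by
    intro ξ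
    have hz : ∀ᵐ t ∂(volume : Measure ℝ), (Set.Ioo 0 T).indicator (fun t => F t ξ) t = 0 := by
      apply ae_eq_zero_of_integral_contDiff_smul_eq_zero
      · exact (MeasureTheory.IntegrableOn.integrable_indicator (hFint ξ) measurableSet_Ioo).locallyIntegrable
      · intro g hg hgsupp
        have h1 : (fun t => g t • (Set.Ioo 0 T).indicator (fun t => F t ξ) t)
            = (Set.Ioo 0 T).indicator (fun t => g t • F t ξ) := by
          funext t
          by_cases ht : t ∈ Set.Ioo 0 T
          · simp [Set.indicator_of_mem ht]
          · simp [Set.indicator_of_notMem ht]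
        rw [h1, integral_indicator measurableSet_Ioo]
        have h2 : ∫ t in Set.Ioo 0 T, g t • F t ξ
            = ∫ t in Set.Ioo 0 T, ∫ x in Set.Ioi (0:ℝ), w t x * (g t * Real.sin (ξ * x)) := by
          apply setIntegral_congr_fun measurableSet_Ioo
          intro t _
          simp only [smul_eq_mul, hF_def]
          rw [← MeasureTheory.integral_const_mul]
          exact setIntegral_congr_fun measurableSet_Ioi (fun x _ => by ring)
        rw [h2]
        exact test_sine T hT w hw ξ g hg.continuous
    have h3 : ∀ᵐ t ∂μt, (Set.Ioo 0 T).indicator (fun t => F t ξ) t = 0 := ae_restrict_of_ae hz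
    have h4 : ∀ᵐ t ∂μt, t ∈ Set.Ioo 0 T := ae_restrict_mem measurableSet_Ioo
    filter_upwards [h3, h4] with t ht1 ht2
    rwa [Set.indicator_of_mem ht2] at ht1
  -- Step II: a.e. t, F t vanishes at all rationals and w t is integrable
  have hae2 : ∀ᵐ t ∂μt, (∀ q : ℚ, F t (q:ℝ) = 0) ∧ Integrable (fun x => w t x) μx :=
    ((ae_all_iff (ι := ℚ)).2 (fun q : ℚ => hF0 (q:ℝ))).and hsec
  -- Step III & IV
  have hmain : ∀ᵐ t ∂μt, ∀ᵐ x ∂μx, w t x = 0 := by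
    filter_upwards [hae2] with t ⟨ht1, ht2⟩
    -- continuity of ξ ↦ F t ξ
    have hcont : Continuous (fun ξ => F t ξ) := by
      apply continuous_of_dominated (bound := fun x => ‖w t x‖)
      · intro ξ
        exact ((hwtm t).mul
          ((Real.measurable_sin.comp (measurable_const.mul measurable_id)))).aestronglyMeasurable
      · intro ξ
        apply Filter.Eventually.of_forall
        intro x
        show ‖w t x * Real.sin (ξ * x)‖ ≤ ‖w t x‖
        rw [norm_mul]
        calc ‖w t x‖ * ‖Real.sin (ξ * x)‖ ≤ ‖w t x‖ * 1 := by
              apply mul_le_mul_of_nonneg_left _ (norm_nonneg _)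
              rw [Real.norm_eq_abs]; exact Real.abs_sin_le_one _
          _ = ‖w t x‖ := mul_one _
      · exact ht2.norm
      · apply Filter.Eventually.of_forall
        intro x
        exact continuous_const.mul (Real.continuous_sin.comp (continuous_mul_right x))
    have hall : ∀ ξ : ℝ, F t ξ = 0 := by
      have heq : (fun ξ => F t ξ) = (fun _ => (0:ℝ)) := by
        apply Continuous.ext_on Rat.denseRange_cast hcont continuous_const
        rintro _ ⟨q, rfl⟩
        exact ht1 q
      intro ξ
      exact congrFun heq ξ
    exact sine_inj (hwtm t) ht2 hall
  -- package
  rw [hvol]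
  have hA : MeasurableSet {p : ℝ × ℝ | ¬ w p.1 p.2 = 0} := by
    have : {p : ℝ × ℝ | ¬ w p.1 p.2 = 0} = (fun p : ℝ × ℝ => w p.1 p.2) ⁻¹' {(0:ℝ)}ᶜ := by
      ext p; simp
    rw [this]
    exact hmeas (measurableSet_singleton 0).compl
  rw [ae_iff, Measure.measure_prod_null hA]
  filter_upwards [hmain] with t ht
  rw [show (Prod.mk t ⁻¹' {p : ℝ × ℝ | ¬ w p.1 p.2 = 0}) = {x | ¬ w t x = 0} from rfl]
  exact ht
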